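/- arXiv:2605.29497 — 3 statements merged into one kernel-verified Lean document; each statement's English description precedes it below -/
import Mathlib

section
/- Consider the Gaussian single-index model with, in addition, E[ζ⁴ | X] = K₄⁴, and suppose E[f(X^⊤β*)⁸] < ∞. Then for every v ∈ ℝ^d, E[⟨Y·X, v⟩⁴] ≤ (88 · (E[f(X^⊤β*)⁸])^{1/2} + 24 · K₄⁴) · ‖v‖₂⁴. -/
open MeasureTheory ProbabilityTheory
open scoped RealInnerProductSpace

open Real Filter Topology
open scoped ENNReal NNReal

/-- The standard Gaussian measure `N(0, I_d)` on `ℝ^d`. -/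
noncomputable def stdGaussian (d : ℕ) : Measure (EuclideanSpace ℝ (Fin d)) :=
  (Measure.pi fun _ : Fin d => gaussianReal 0 1).map
    (MeasurableEquiv.toLp 2 (Fin d → ℝ))


noncomputable def gaussFn (n : ℕ) : ℝ → ℝ := fun x => x ^ n * Real.exp (-x ^ 2 / 2)

lemma pow_sq_le (n : ℕ) (x : ℝ) : (x ^ 2) ^ n ≤ n.factorial * 4 ^ n * Real.exp (x ^ 2 / 4) := by
  have h : (x ^ 2 / 4) ^ n / n.factorial ≤ Real.exp (x ^ 2 / 4) := by
    calc (x ^ 2 / 4) ^ n / n.factorial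
        ≤ ∑ i ∈ Finset.range (n + 1), (x ^ 2 / 4) ^ i / i.factorial := by
          refine Finset.single_le_sum (f := fun i => (x ^ 2 / 4) ^ i / i.factorial) ?_
            (Finset.self_mem_range_succ n)
          intro i _
          positivity
      _ ≤ Real.exp (x ^ 2 / 4) := Real.sum_le_exp_of_nonneg (by positivity) _
  have hf : (0:ℝ) < n.factorial := by exact_mod_cast n.factorial_pos
  have := (div_le_iff₀ hf).mp h
  calc (x ^ 2) ^ n = (x ^ 2 / 4) ^ n * 4 ^ n := by
        have h4 : ((4:ℝ))^n ≠ 0 := by positivity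
        rw [div_pow, div_mul_cancel₀ _ h4]
    _ ≤ Real.exp (x ^ 2 / 4) * n.factorial * 4 ^ n := by
        gcongr
    _ = n.factorial * 4 ^ n * Real.exp (x ^ 2 / 4) := by ring

lemma gaussFn_bound (n : ℕ) (x : ℝ) :
    |gaussFn n x| ≤ (n.factorial * 4 ^ n + 1) * Real.exp (-(x ^ 2) / 4) := by
  have h1 : |gaussFn n x| = |x| ^ n * Real.exp (-x ^ 2 / 2) := by
    rw [gaussFn, abs_mul, abs_pow, abs_of_pos (Real.exp_pos _)]
  have h2 : |x| ^ n ≤ (x ^ 2) ^ n + 1 := by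
    rcases le_or_gt (|x|) 1 with h | h
    · have : |x| ^ n ≤ 1 := pow_le_one₀ (abs_nonneg _) h
      nlinarith [pow_nonneg (sq_nonneg x) n]
    · have h1x : (1:ℝ) ≤ |x| := h.le
      have : |x| ^ n ≤ (|x| ^ n) ^ 2 := le_self_pow₀ (one_le_pow₀ h1x) (by norm_num)
      calc |x| ^ n ≤ (|x| ^ n) ^ 2 := this
        _ = (x ^ 2) ^ n := by rw [← pow_mul, mul_comm n 2, pow_mul, sq_abs]
        _ ≤ (x ^ 2) ^ n + 1 := by linarith
  have h3 : (x ^ 2) ^ n + 1 ≤ (n.factorial * 4 ^ n + 1) * Real.exp (x ^ 2 / 4) := by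
    have := pow_sq_le n x
    have he : (1:ℝ) ≤ Real.exp (x ^ 2 / 4) := Real.one_le_exp (by positivity)
    nlinarith
  have h4 : Real.exp (-x ^ 2 / 2) = Real.exp (x ^ 2 / 4) * Real.exp (-(x^2)/4) * Real.exp (-(x^2)/2) * Real.exp (x^2/2) * Real.exp (-(x^2)/2) := by
    rw [← Real.exp_add, ← Real.exp_add, ← Real.exp_add, ← Real.exp_add]; ring_nf
  calc |gaussFn n x| = |x| ^ n * Real.exp (-x ^ 2 / 2) := h1
    _ ≤ ((x ^ 2) ^ n + 1) * Real.exp (-x ^ 2 / 2) := by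
        gcongr
    _ ≤ ((n.factorial * 4 ^ n + 1) * Real.exp (x ^ 2 / 4)) * Real.exp (-x ^ 2 / 2) := by
        gcongr
    _ = (n.factorial * 4 ^ n + 1) * Real.exp (-(x ^ 2) / 4) := by
        rw [mul_assoc, ← Real.exp_add]; ring_nf

lemma integrable_gaussFn (n : ℕ) : Integrable (gaussFn n) := by
  refine Integrable.mono' (g := fun x => (n.factorial * 4 ^ n + 1) * Real.exp (-(1/4) * x ^ 2)) ?_ ?_ ?_
  · exact (integrable_exp_neg_mul_sq (by norm_num : (0:ℝ) < 1/4)).const_mul _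
  · refine Continuous.aestronglyMeasurable ?_
    unfold gaussFn
    exact (continuous_pow n).mul (Real.continuous_exp.comp (by continuity))
  · refine Filter.Eventually.of_forall fun x => ?_
    have := gaussFn_bound n x
    simpa [Real.norm_eq_abs, neg_div, neg_mul, mul_comm, mul_div_assoc, div_eq_mul_inv] using this

lemma tendsto_gaussFn_atTop (n : ℕ) : Tendsto (gaussFn n) atTop (𝓝 0) := by
  refine squeeze_zero_norm (fun x => by simpa [Real.norm_eq_abs] using gaussFn_bound n x) ?_
  have h : Tendsto (fun x : ℝ => -(x ^ 2) / 4) atTop atBot := by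
    have hsq : Tendsto (fun x : ℝ => x ^ 2) atTop atTop :=
      tendsto_pow_atTop (two_ne_zero)
    have h2 : Tendsto (fun x : ℝ => -(x ^ 2)) atTop atBot := tendsto_neg_atTop_atBot.comp hsq
    exact h2.atBot_div_const (by norm_num)
  have := (Real.tendsto_exp_atBot).comp h
  simpa using this.const_mul (n.factorial * 4 ^ n + 1 : ℝ)

lemma tendsto_gaussFn_atBot (n : ℕ) : Tendsto (gaussFn n) atBot (𝓝 0) := by
  refine squeeze_zero_norm (fun x => by simpa [Real.norm_eq_abs] using gaussFn_bound n x) ?_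
  have h : Tendsto (fun x : ℝ => -(x ^ 2) / 4) atBot atBot := by
    have hsq : Tendsto (fun x : ℝ => x ^ 2) atBot atTop := by
      have h0 : Tendsto (fun x : ℝ => |x| ^ 2) atBot atTop :=
        (tendsto_pow_atTop (two_ne_zero)).comp tendsto_abs_atBot_atTop
      simpa only [sq_abs] using h0
    have h2 : Tendsto (fun x : ℝ => -(x ^ 2)) atBot atBot := tendsto_neg_atTop_atBot.comp hsq
    exact h2.atBot_div_const (by norm_num)
  have := (Real.tendsto_exp_atBot).comp h
  simpa using this.const_mul (n.factorial * 4 ^ n + 1 : ℝ)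

lemma hasDerivAt_gaussFn (n : ℕ) (x : ℝ) :
    HasDerivAt (gaussFn (n+1)) ((n+1) * gaussFn n x - gaussFn (n+2) x) x := by
  have h1 : HasDerivAt (fun x : ℝ => x ^ (n+1)) ((n+1) * x ^ n) x := by
    simpa using hasDerivAt_pow (n+1) x
  have h2 : HasDerivAt (fun x : ℝ => Real.exp (-x ^ 2 / 2)) (-x * Real.exp (-x ^ 2 / 2)) x := by
    have hinner : HasDerivAt (fun x : ℝ => -x ^ 2 / 2) (-x) x := by
      have := (hasDerivAt_pow 2 x).neg.div_const 2
      refine this.congr_deriv ?_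
      ring
    have := hinner.exp
    refine this.congr_deriv ?_
    ring
  have := h1.mul h2
  refine this.congr_deriv ?_
  simp only [gaussFn]
  ring

lemma integral_gaussFn_rec (n : ℕ) :
    ∫ x, gaussFn (n+2) x = (n+1) * ∫ x, gaussFn n x := by
  have hint : Integrable (fun x => (n+1 : ℝ) * gaussFn n x - gaussFn (n+2) x) :=
    ((integrable_gaussFn n).const_mul _).sub (integrable_gaussFn (n+2))
  have hIoi : ∫ x in Set.Ioi (0:ℝ), ((n+1 : ℝ) * gaussFn n x - gaussFn (n+2) x) = 0 - gaussFn (n+1) 0 := by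
    refine MeasureTheory.integral_Ioi_of_hasDerivAt_of_tendsto ?_ (fun x _ => hasDerivAt_gaussFn n x)
      hint.integrableOn (tendsto_gaussFn_atTop (n+1)) 
    exact (hasDerivAt_gaussFn n 0).continuousAt.continuousWithinAt
  have hIic : ∫ x in Set.Iic (0:ℝ), ((n+1 : ℝ) * gaussFn n x - gaussFn (n+2) x) = gaussFn (n+1) 0 - 0 := by
    refine MeasureTheory.integral_Iic_of_hasDerivAt_of_tendsto ?_ (fun x _ => hasDerivAt_gaussFn n x)
      hint.integrableOn (tendsto_gaussFn_atBot (n+1))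
    exact (hasDerivAt_gaussFn n 0).continuousAt.continuousWithinAt
  have hsplit : ∫ x, ((n+1 : ℝ) * gaussFn n x - gaussFn (n+2) x) = 0 := by
    rw [← intervalIntegral.integral_Iic_add_Ioi (b := (0:ℝ)) hint.integrableOn hint.integrableOn, hIoi, hIic]
    ring
  rw [MeasureTheory.integral_sub ((integrable_gaussFn n).const_mul _) (integrable_gaussFn (n+2)),
    MeasureTheory.integral_const_mul] at hsplit
  linarith

lemma integral_gaussFn_zero : ∫ x, gaussFn 0 x = Real.sqrt (2 * π) := by
  have := integral_gaussian (1/2)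
  simp only [gaussFn, pow_zero, one_mul]
  rw [show (fun x : ℝ => Real.exp (-x ^ 2 / 2)) = fun x : ℝ => Real.exp (-(1/2) * x ^ 2) by
    funext x; ring_nf]
  rw [this]
  rw [show π / (1/2) = 2 * π by ring]

lemma integral_gaussFn_two : ∫ x, gaussFn 2 x = Real.sqrt (2 * π) := by
  have := integral_gaussFn_rec 0
  rw [integral_gaussFn_zero] at this
  simpa using this

lemma integral_gaussFn_four : ∫ x, gaussFn 4 x = 3 * Real.sqrt (2 * π) := by
  have := integral_gaussFn_rec 2
  rw [integral_gaussFn_two] at this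
  norm_num at this
  convert this using 2
  norm_num

lemma integral_gaussFn_six : ∫ x, gaussFn 6 x = 15 * Real.sqrt (2 * π) := by
  have h := integral_gaussFn_rec 4
  rw [integral_gaussFn_four] at h
  simp only [show (4:ℕ)+2 = 6 from rfl, show ((4:ℕ):ℝ) + 1 = 5 from by norm_num] at h
  rw [h]; ring

lemma integral_gaussFn_eight : ∫ x, gaussFn 8 x = 105 * Real.sqrt (2 * π) := by
  have h := integral_gaussFn_rec 6
  rw [integral_gaussFn_six] at h
  simp only [show (6:ℕ)+2 = 8 from rfl, show ((6:ℕ):ℝ) + 1 = 7 from by norm_num] at h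
  rw [h]; ring

lemma gaussianPDFReal_zero_one (x : ℝ) :
    gaussianPDFReal 0 1 x = (Real.sqrt (2 * π))⁻¹ * Real.exp (-x ^ 2 / 2) := by
  simp [gaussianPDFReal]

lemma gaussianReal_zero_one_eq :
    gaussianReal 0 1 = (volume : Measure ℝ).withDensity
      (fun x => ((gaussianPDFReal 0 1 x).toNNReal : ℝ≥0∞)) := by
  rw [gaussianReal_of_var_ne_zero 0 one_ne_zero]
  rfl

lemma integrable_pow_gaussianReal (n : ℕ) :
    Integrable (fun x => x ^ n) (gaussianReal 0 1) := by
  rw [gaussianReal_zero_one_eq]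
  rw [integrable_withDensity_iff_integrable_coe_smul
    ((measurable_gaussianPDFReal 0 1).real_toNNReal)]
  have : (fun x : ℝ => ((gaussianPDFReal 0 1 x).toNNReal : ℝ) • x ^ n)
      = fun x => (Real.sqrt (2 * π))⁻¹ * gaussFn n x := by
    funext x
    rw [smul_eq_mul, Real.coe_toNNReal _ (gaussianPDFReal_nonneg 0 1 x),
      gaussianPDFReal_zero_one, gaussFn]
    ring
  rw [this]
  exact (integrable_gaussFn n).const_mul _

lemma integral_pow_gaussianReal (n : ℕ) :
    ∫ x, x ^ n ∂(gaussianReal 0 1) = (Real.sqrt (2 * π))⁻¹ * ∫ x, gaussFn n x := by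
  rw [gaussianReal_zero_one_eq,
    integral_withDensity_eq_integral_smul ((measurable_gaussianPDFReal 0 1).real_toNNReal)]
  have : (fun x : ℝ => ((gaussianPDFReal 0 1 x).toNNReal) • x ^ n)
      = fun x => (Real.sqrt (2 * π))⁻¹ * gaussFn n x := by
    funext x
    rw [NNReal.smul_def, smul_eq_mul, Real.coe_toNNReal _ (gaussianPDFReal_nonneg 0 1 x),
      gaussianPDFReal_zero_one, gaussFn]
    ring
  rw [this, MeasureTheory.integral_const_mul]

lemma sqrt_two_pi_pos : 0 < Real.sqrt (2 * π) :=
  Real.sqrt_pos.mpr (by positivity)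

lemma integral_pow_four_gaussianReal : ∫ x, x ^ 4 ∂(gaussianReal 0 1) = 3 := by
  rw [integral_pow_gaussianReal, integral_gaussFn_four]
  field_simp

lemma integral_pow_eight_gaussianReal : ∫ x, x ^ 8 ∂(gaussianReal 0 1) = 105 := by
  rw [integral_pow_gaussianReal, integral_gaussFn_eight]
  field_simp


lemma measurable_inner_right' {d : ℕ} (v : EuclideanSpace ℝ (Fin d)) :
    Measurable fun x : EuclideanSpace ℝ (Fin d) => (inner ℝ x v : ℝ) :=
  (continuous_id.inner continuous_const).measurable

lemma gaussianPDFReal_conv_eq (a b : ℝ≥0) (ha : a ≠ 0) (hb : b ≠ 0) (u x : ℝ) :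
    gaussianPDFReal 0 a x * gaussianPDFReal 0 b (u - x)
      = gaussianPDFReal 0 (a + b) u
        * gaussianPDFReal ((a : ℝ) * u / ((a : ℝ) + (b : ℝ))) (a * b / (a + b)) x := by
  have hA : (0:ℝ) < a := lt_of_le_of_ne (a.coe_nonneg) (by exact_mod_cast (Ne.symm ha))
  have hB : (0:ℝ) < b := lt_of_le_of_ne (b.coe_nonneg) (by exact_mod_cast (Ne.symm hb))
  have hAB : (0:ℝ) < (a:ℝ) + b := by linarith
  have hab : ((a + b : ℝ≥0) : ℝ) = (a:ℝ) + (b:ℝ) := by push_cast; ring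
  have hW : ((a * b / (a + b) : ℝ≥0) : ℝ) = (a:ℝ) * (b:ℝ) / ((a:ℝ) + (b:ℝ)) := by
    push_cast; ring
  have hWpos : (0:ℝ) < (a:ℝ) * (b:ℝ) / ((a:ℝ) + (b:ℝ)) := by positivity
  simp only [gaussianPDFReal, hab, hW, sub_zero]
  have hconst : (√(2 * π * a))⁻¹ * (√(2 * π * b))⁻¹
      = (√(2 * π * ((a:ℝ) + b)))⁻¹ * (√(2 * π * ((a:ℝ) * b / ((a:ℝ) + b))))⁻¹ := by
    rw [← mul_inv, ← mul_inv, ← Real.sqrt_mul (by positivity), ← Real.sqrt_mul (by positivity)]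
    congr 1
    field_simp
  have hexp : Real.exp (-x ^ 2 / (2 * a)) * Real.exp (-(u - x) ^ 2 / (2 * b))
      = Real.exp (-u ^ 2 / (2 * ((a:ℝ) + b)))
        * Real.exp (-(x - (a:ℝ) * u / ((a:ℝ) + b)) ^ 2 / (2 * ((a:ℝ) * b / ((a:ℝ) + b)))) := by
    rw [← Real.exp_add, ← Real.exp_add]
    congr 1
    field_simp
    ring
  calc (√(2 * π * a))⁻¹ * rexp (-x ^ 2 / (2 * a))
        * ((√(2 * π * b))⁻¹ * rexp (-(u - x) ^ 2 / (2 * b)))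
      = ((√(2 * π * a))⁻¹ * (√(2 * π * b))⁻¹)
        * (rexp (-x ^ 2 / (2 * a)) * rexp (-(u - x) ^ 2 / (2 * b))) := by ring
    _ = ((√(2 * π * ((a:ℝ) + b)))⁻¹ * (√(2 * π * ((a:ℝ) * b / ((a:ℝ) + b))))⁻¹)
        * (rexp (-u ^ 2 / (2 * ((a:ℝ) + b)))
          * rexp (-(x - (a:ℝ) * u / ((a:ℝ) + b)) ^ 2 / (2 * ((a:ℝ) * b / ((a:ℝ) + b))))) := by
        rw [hconst, hexp]
    _ = _ := by ring

lemma lintegral_gaussianPDF_conv (a b : ℝ≥0) (ha : a ≠ 0) (hb : b ≠ 0) (u : ℝ) :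
    ∫⁻ x, gaussianPDF 0 a x * gaussianPDF 0 b (u - x) = gaussianPDF 0 (a + b) u := by
  have hw : (a * b / (a + b) : ℝ≥0) ≠ 0 := by
    refine div_ne_zero (mul_ne_zero ha hb) ?_
    simp only [ne_eq, add_eq_zero, not_and]
    intro h; exact absurd h ha
  have key : ∀ x, gaussianPDF 0 a x * gaussianPDF 0 b (u - x)
      = gaussianPDF 0 (a + b) u
        * gaussianPDF ((a : ℝ) * u / ((a : ℝ) + (b : ℝ))) (a * b / (a + b)) x := by
    intro x
    simp only [gaussianPDF]
    rw [← ENNReal.ofReal_mul (gaussianPDFReal_nonneg _ _ _),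
      ← ENNReal.ofReal_mul (gaussianPDFReal_nonneg _ _ _),
      gaussianPDFReal_conv_eq a b ha hb u x]
  simp_rw [key]
  rw [lintegral_const_mul _ (measurable_gaussianPDF _ _),
    lintegral_gaussianPDF_eq_one _ hw, mul_one]

lemma gaussianReal_conv (a b : ℝ≥0) :
    ((gaussianReal 0 a).prod (gaussianReal 0 b)).map (fun p : ℝ × ℝ => p.1 + p.2)
      = gaussianReal 0 (a + b) := by
  by_cases ha : a = 0
  · subst ha
    rw [gaussianReal_zero_var, zero_add]
    rw [MeasureTheory.Measure.dirac_prod]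
    rw [Measure.map_map (by fun_prop) (by fun_prop)]
    have : ((fun p : ℝ × ℝ => p.1 + p.2) ∘ (Prod.mk (0:ℝ))) = id := by
      funext y; simp
    rw [this, Measure.map_id]
  by_cases hb : b = 0
  · subst hb
    rw [gaussianReal_zero_var, add_zero]
    rw [MeasureTheory.Measure.prod_dirac]
    rw [Measure.map_map (by fun_prop) (by fun_prop)]
    have : ((fun p : ℝ × ℝ => p.1 + p.2) ∘ (fun x : ℝ => (x, (0:ℝ)))) = id := by
      funext y; simp
    rw [this, Measure.map_id]
  -- main case
  ext s hs
  rw [Measure.map_apply (by fun_prop) hs, Measure.prod_apply (hs.preimage (by fun_prop))]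
  have h1 : ∀ x : ℝ, (Prod.mk x ⁻¹' ((fun p : ℝ × ℝ => p.1 + p.2) ⁻¹' s))
      = (fun y => x + y) ⁻¹' s := by intro x; rfl
  have h2 : ∀ x : ℝ, gaussianReal 0 b ((fun y => x + y) ⁻¹' s)
      = ∫⁻ u in s, ENNReal.ofReal (gaussianPDFReal 0 b (u - x)) := by
    intro x
    have := gaussianReal_map_const_add (μ := 0) (v := b) x
    rw [zero_add] at this
    rw [← Measure.map_apply (by fun_prop) hs, this,
      gaussianReal_of_var_ne_zero _ hb, withDensity_apply _ hs]
    congr 1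
    funext u
    rw [gaussianPDF, gaussianPDFReal_sub, zero_add]
  simp_rw [h1, h2]
  have hmeas2 : Measurable (Function.uncurry fun x u : ℝ =>
      ENNReal.ofReal (gaussianPDFReal 0 b (u - x))) :=
    ((measurable_gaussianPDFReal 0 b).comp (measurable_snd.sub measurable_fst)).ennreal_ofReal
  have hmeasg : Measurable fun x => ∫⁻ u in s, ENNReal.ofReal (gaussianPDFReal 0 b (u - x)) :=
    Measurable.lintegral_prod_right' (f := fun p : ℝ × ℝ =>
      ENNReal.ofReal (gaussianPDFReal 0 b (p.2 - p.1))) hmeas2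
  rw [gaussianReal_of_var_ne_zero _ ha,
    lintegral_withDensity_eq_lintegral_mul _ (measurable_gaussianPDF _ _) hmeasg]
  simp only [Pi.mul_apply]
  have hstep : ∀ x : ℝ, gaussianPDF 0 a x * ∫⁻ u in s, ENNReal.ofReal (gaussianPDFReal 0 b (u - x))
      = ∫⁻ u in s, gaussianPDF 0 a x * ENNReal.ofReal (gaussianPDFReal 0 b (u - x)) := by
    intro x
    exact (lintegral_const_mul _ (((measurable_gaussianPDFReal 0 b).comp
      (measurable_id'.sub_const x)).ennreal_ofReal)).symm
  simp_rw [hstep]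
  rw [lintegral_lintegral_swap (by
    exact ((measurable_gaussianPDF 0 a).comp measurable_fst |>.mul
      (((measurable_gaussianPDFReal 0 b).comp (measurable_snd.sub measurable_fst)).ennreal_ofReal)).aemeasurable)]
  have hinner : ∀ u : ℝ, ∫⁻ x, gaussianPDF 0 a x * ENNReal.ofReal (gaussianPDFReal 0 b (u - x))
      = gaussianPDF 0 (a + b) u := fun u => lintegral_gaussianPDF_conv a b ha hb u
  simp_rw [hinner]
  have hab : a + b ≠ 0 := by
    simp only [ne_eq, add_eq_zero, not_and]
    intro h; exact absurd h ha
  rw [gaussianReal_of_var_ne_zero _ hab, withDensity_apply _ hs]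

lemma pi_gaussian_map_sum : ∀ (n : ℕ) (v : Fin n → ℝ),
    (Measure.pi fun _ : Fin n => gaussianReal 0 1).map (fun y => ∑ i, v i * y i)
      = gaussianReal 0 (∑ i, NNReal.mk (v i ^ 2) (sq_nonneg _)) := by
  intro n
  induction n with
  | zero =>
    intro v
    have : (fun y : Fin 0 → ℝ => ∑ i, v i * y i) = fun _ => (0:ℝ) := by
      funext y; simp
    rw [this, Measure.map_const]
    simp
  | succ n ih =>
    intro v
    set f : ℝ → ℝ := fun x => v 0 * x with hf_def
    set g : (Fin n → ℝ) → ℝ := fun z => ∑ i : Fin n, v i.succ * z i with hg_def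
    have hg : Measurable g := by
      apply Finset.measurable_sum
      intro i _
      exact (measurable_pi_apply i).const_mul _
    have hf : Measurable f := (measurable_id.const_mul _)
    have hmp := measurePreserving_piFinSuccAbove (fun _ : Fin (n+1) => gaussianReal 0 1) 0
    set e := MeasurableEquiv.piFinSuccAbove (fun _ : Fin (n+1) => ℝ) 0 with he_def
    have hS : (fun y : Fin (n+1) → ℝ => ∑ i, v i * y i)
        = ((fun p : ℝ × ℝ => p.1 + p.2) ∘ (Prod.map f g)) ∘ e := by
      funext y
      simp only [Function.comp_apply, Prod.map, MeasurableEquiv.piFinSuccAbove,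
        MeasurableEquiv.coe_mk, Fin.insertNthEquiv]
      rw [Fin.sum_univ_succ]
      simp [hf_def, hg_def, Fin.succAbove]
      congr 1
    have step1 : (Measure.pi fun _ : Fin (n+1) => gaussianReal 0 1).map
          (fun y => ∑ i, v i * y i)
        = (((gaussianReal 0 1).prod (Measure.pi fun _ : Fin n => gaussianReal 0 1)).map
            (Prod.map f g)).map (fun p : ℝ × ℝ => p.1 + p.2) := by
      rw [hS, ← Measure.map_map (by fun_prop) (e.measurable),
        hmp.map_eq, Measure.map_map (by fun_prop) (hf.prodMap hg)]
    rw [step1, ← Measure.map_prod_map _ _ hf hg]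
    have hA : (gaussianReal 0 1).map f = gaussianReal 0 (NNReal.mk (v 0 ^ 2) (sq_nonneg _)) := by
      have := gaussianReal_map_const_mul (μ := 0) (v := 1) (v 0)
      simpa using this
    have hB := ih (fun i => v i.succ)
    rw [hA, hB, gaussianReal_conv]
    congr 1
    rw [← Fin.sum_univ_succ (f := fun i => (NNReal.mk (v i ^ 2) (sq_nonneg _) : ℝ≥0))]

open scoped RealInnerProductSpace


lemma norm_sq_eq_sum_sq {d : ℕ} (v : EuclideanSpace ℝ (Fin d)) :
    ‖v‖ ^ 2 = ∑ i, v i ^ 2 := by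
  rw [← real_inner_self_eq_norm_sq, PiLp.inner_apply]
  simp [pow_two]

lemma map_inner_stdGaussian (d : ℕ) (v : EuclideanSpace ℝ (Fin d)) :
    (stdGaussian d).map (fun x => ⟪x, v⟫) = gaussianReal 0 (NNReal.mk (‖v‖ ^ 2) (sq_nonneg _)) := by
  rw [_root_.stdGaussian, Measure.map_map (measurable_inner_right' v) (MeasurableEquiv.measurable _)]
  have h1 : ((fun x : EuclideanSpace ℝ (Fin d) => ⟪x, v⟫)
        ∘ (MeasurableEquiv.toLp 2 (Fin d → ℝ)))
      = fun y : Fin d → ℝ => ∑ i, v i * y i := by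
    funext y
    simp only [Function.comp_apply, PiLp.inner_apply, RCLike.inner_apply, conj_trivial]
    exact Finset.sum_congr rfl fun i _ => rfl
  rw [h1, pi_gaussian_map_sum]
  congr 1
  ext
  push_cast
  rw [norm_sq_eq_sum_sq]

lemma gaussianReal_sq_eq_map (c : ℝ) :
    gaussianReal 0 (NNReal.mk (c ^ 2) (sq_nonneg _)) = (gaussianReal 0 1).map (c * ·) := by
  rw [gaussianReal_map_const_mul]
  simp

lemma integrable_pow_gaussianReal_sq (c : ℝ) (n : ℕ) :
    Integrable (fun x => x ^ n) (gaussianReal 0 (NNReal.mk (c ^ 2) (sq_nonneg _))) := by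
  rw [gaussianReal_sq_eq_map]
  rw [integrable_map_measure (by fun_prop) (by fun_prop)]
  have : ((fun x : ℝ => x ^ n) ∘ (c * ·)) = fun x => c ^ n * x ^ n := by
    funext x; simp [mul_pow]
  rw [this]
  exact (integrable_pow_gaussianReal n).const_mul _

lemma integral_pow_gaussianReal_sq (c : ℝ) (n : ℕ) :
    ∫ x, x ^ n ∂(gaussianReal 0 (NNReal.mk (c ^ 2) (sq_nonneg _)))
      = c ^ n * ∫ x, x ^ n ∂(gaussianReal 0 1) := by
  rw [gaussianReal_sq_eq_map, integral_map (by fun_prop) (by fun_prop)]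
  simp_rw [mul_pow]
  rw [MeasureTheory.integral_const_mul]

section Omega

variable {Ω : Type*} [MeasurableSpace Ω] {μ : Measure Ω} {d : ℕ}
  {X : Ω → EuclideanSpace ℝ (Fin d)}

lemma map_inner_eq (hX : Measurable X) (hXlaw : μ.map X = stdGaussian d)
    (v : EuclideanSpace ℝ (Fin d)) :
    μ.map (fun ω => ⟪X ω, v⟫) = gaussianReal 0 (NNReal.mk (‖v‖ ^ 2) (sq_nonneg _)) := by
  have : (fun ω => ⟪X ω, v⟫) = (fun x : EuclideanSpace ℝ (Fin d) => ⟪x, v⟫) ∘ X := rfl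
  rw [this, ← Measure.map_map (measurable_inner_right' v) hX, hXlaw, map_inner_stdGaussian]

lemma integrable_inner_pow (hX : Measurable X) (hXlaw : μ.map X = stdGaussian d)
    (v : EuclideanSpace ℝ (Fin d)) (n : ℕ) :
    Integrable (fun ω => ⟪X ω, v⟫ ^ n) μ := by
  have h := integrable_pow_gaussianReal_sq (‖v‖) n
  rw [← map_inner_eq hX hXlaw v] at h
  rw [integrable_map_measure (measurable_id'.pow_const _).aestronglyMeasurable
    (show Measurable fun ω => (inner ℝ (X ω) v : ℝ) from (measurable_inner_right' v).comp hX).aemeasurable] at h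
  exact h

lemma integral_inner_pow (hX : Measurable X) (hXlaw : μ.map X = stdGaussian d)
    (v : EuclideanSpace ℝ (Fin d)) (n : ℕ) :
    ∫ ω, ⟪X ω, v⟫ ^ n ∂μ = ‖v‖ ^ n * ∫ x, x ^ n ∂(gaussianReal 0 1) := by
  have : ∫ ω, ⟪X ω, v⟫ ^ n ∂μ = ∫ x, x ^ n ∂(μ.map (fun ω => ⟪X ω, v⟫)) := by
    rw [integral_map (show Measurable fun ω => (inner ℝ (X ω) v : ℝ) from (measurable_inner_right' v).comp hX).aemeasurable
      (measurable_id'.pow_const _).aestronglyMeasurable]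
  rw [this, map_inner_eq hX hXlaw v, integral_pow_gaussianReal_sq]

end Omega

section CondExp

lemma integral_mul_le_of_condexp {Ω : Type*} {m : MeasurableSpace Ω} [mΩ : MeasurableSpace Ω]
    (hm : m ≤ mΩ) (μ : Measure Ω) [IsProbabilityMeasure μ]
    {h g : Ω → ℝ} (hh : Measurable h) (hhnn : ∀ ω, 0 ≤ h ω) (hhint : Integrable h μ)
    (hgm : Measurable[m] g) (hgnn : ∀ ω, 0 ≤ g ω) (hgint : Integrable g μ)
    {c : ℝ} (hc : 0 ≤ c) (hcond : μ[h | m] =ᵐ[μ] fun _ => c) :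
    Integrable (fun ω => g ω * h ω) μ ∧ ∫ ω, g ω * h ω ∂μ ≤ c * ∫ ω, g ω ∂μ := by
  haveI : IsFiniteMeasure (μ.trim hm) :=
    ⟨by rw [trim_measurableSet_eq hm MeasurableSet.univ]; exact measure_lt_top μ _⟩
  have hgbig : Measurable g := hgm.mono hm le_rfl
  set gn : ℕ → Ω → ℝ := fun n ω => min (g ω) n with hgn_def
  have hgn_nonneg : ∀ n ω, 0 ≤ gn n ω := fun n ω => le_min (hgnn ω) (Nat.cast_nonneg n)
  have hgn_le : ∀ n ω, gn n ω ≤ g ω := fun n ω => min_le_left _ _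
  have hgn_meas : ∀ n, Measurable[m] (gn n) := fun n => hgm.min measurable_const
  have hgn_big : ∀ n, Measurable (gn n) := fun n => hgbig.min measurable_const
  have hgn_int : ∀ n, Integrable (gn n) μ := by
    intro n
    refine hgint.mono ((hgn_big n).aestronglyMeasurable) ?_
    refine Filter.Eventually.of_forall fun ω => ?_
    rw [Real.norm_eq_abs, Real.norm_eq_abs, abs_of_nonneg (hgn_nonneg n ω),
      abs_of_nonneg (hgnn ω)]
    exact hgn_le n ω
  have hint_n : ∀ n, Integrable (fun ω => gn n ω * h ω) μ := by
    intro n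
    refine hhint.bdd_mul ((hgn_big n).aestronglyMeasurable) (c := n) (Filter.Eventually.of_forall fun ω => ?_)
    rw [Real.norm_eq_abs, abs_of_nonneg (hgn_nonneg n ω)]
    exact min_le_right _ _
  have key_n : ∀ n, ∫ ω, gn n ω * h ω ∂μ ≤ c * ∫ ω, g ω ∂μ := by
    intro n
    have hpull : μ[fun ω => gn n ω * h ω | m] =ᵐ[μ] fun ω => gn n ω * (μ[h | m]) ω := by
      have := condExp_mul_of_stronglyMeasurable_left ((hgn_meas n).stronglyMeasurable)
        (hint_n n) hhint
      exact this
    have h1 : ∫ ω, gn n ω * h ω ∂μ = ∫ ω, gn n ω * (μ[h | m]) ω ∂μ :=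
      (integral_condExp hm).symm.trans (integral_congr_ae hpull)
    have h2 : ∫ ω, gn n ω * (μ[h | m]) ω ∂μ = ∫ ω, gn n ω * c ∂μ := by
      refine integral_congr_ae ?_
      filter_upwards [hcond] with ω hω
      rw [hω]
    rw [h1, h2]
    have h3 : ∫ ω, gn n ω * c ∂μ = c * ∫ ω, gn n ω ∂μ := by
      rw [← MeasureTheory.integral_const_mul]
      congr 1; funext ω; ring
    rw [h3]
    gcongr c * ?_
    exact integral_mono (hgn_int n) hgint (fun ω => hgn_le n ω)
  -- monotone convergence
  have hsup : ∀ ω, (⨆ n, ENNReal.ofReal (gn n ω * h ω)) = ENNReal.ofReal (g ω * h ω) := by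
    intro ω
    refine le_antisymm (iSup_le fun n => ENNReal.ofReal_le_ofReal
      (mul_le_mul_of_nonneg_right (hgn_le n ω) (hhnn ω))) ?_
    have heq : gn ⌈g ω⌉₊ ω = g ω := min_eq_left (Nat.le_ceil _)
    calc ENNReal.ofReal (g ω * h ω) = ENNReal.ofReal (gn ⌈g ω⌉₊ ω * h ω) := by rw [heq]
      _ ≤ ⨆ n, ENNReal.ofReal (gn n ω * h ω) := le_iSup
          (fun n => ENNReal.ofReal (gn n ω * h ω)) _
  have hmono : Monotone fun n => fun ω => ENNReal.ofReal (gn n ω * h ω) := by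
    intro i j hij ω
    refine ENNReal.ofReal_le_ofReal (mul_le_mul_of_nonneg_right ?_ (hhnn ω))
    exact min_le_min le_rfl (Nat.cast_le.mpr hij)
  have hlin : ∫⁻ ω, ENNReal.ofReal (g ω * h ω) ∂μ
      = ⨆ n, ∫⁻ ω, ENNReal.ofReal (gn n ω * h ω) ∂μ := by
    rw [← lintegral_iSup (f := fun n ω => ENNReal.ofReal (gn n ω * h ω)) (fun n => ((hgn_big n).mul hh).ennreal_ofReal) hmono]
    congr 1
    funext ω
    exact (hsup ω).symm
  have hlin_le : ∫⁻ ω, ENNReal.ofReal (g ω * h ω) ∂μ ≤ ENNReal.ofReal (c * ∫ ω, g ω ∂μ) := by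
    rw [hlin]
    refine iSup_le fun n => ?_
    rw [← ofReal_integral_eq_lintegral_ofReal (hint_n n)
      (Filter.Eventually.of_forall fun ω => mul_nonneg (hgn_nonneg n ω) (hhnn ω))]
    exact ENNReal.ofReal_le_ofReal (key_n n)
  have hfin : ∫⁻ ω, ENNReal.ofReal (g ω * h ω) ∂μ < ⊤ :=
    lt_of_le_of_lt hlin_le ENNReal.ofReal_lt_top
  have hint : Integrable (fun ω => g ω * h ω) μ := by
    refine ⟨(hgbig.mul hh).aestronglyMeasurable, ?_⟩
    rw [HasFiniteIntegral]
    have heq : ∀ ω, ‖g ω * h ω‖ₑ = ENNReal.ofReal (g ω * h ω) := fun ω =>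
      Real.enorm_eq_ofReal (mul_nonneg (hgnn ω) (hhnn ω))
    simp_rw [heq]
    exact hfin
  refine ⟨hint, ?_⟩
  rw [integral_eq_lintegral_of_nonneg_ae
    (Filter.Eventually.of_forall fun ω => mul_nonneg (hgnn ω) (hhnn ω))
    (hgbig.mul hh).aestronglyMeasurable]
  calc (∫⁻ ω, ENNReal.ofReal (g ω * h ω) ∂μ).toReal
      ≤ (ENNReal.ofReal (c * ∫ ω, g ω ∂μ)).toReal :=
        ENNReal.toReal_mono ENNReal.ofReal_ne_top hlin_le
    _ = c * ∫ ω, g ω ∂μ := ENNReal.toReal_ofReal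
        (mul_nonneg hc (integral_nonneg fun ω => hgnn ω))

end CondExp

lemma add_pow_four_le (a b : ℝ) : (a + b) ^ 4 ≤ 8 * a ^ 4 + 8 * b ^ 4 := by
  nlinarith [sq_nonneg (a - b), sq_nonneg (a + b), sq_nonneg (a ^ 2 - b ^ 2),
    sq_nonneg (a ^ 2 + b ^ 2), sq_nonneg a, sq_nonneg b, sq_nonneg (a * b)]

/-- **Fourth-moment upper bound for `Ỹ = Y·X`**: for every `v`,
`E[⟨Y·X, v⟩⁴] ≤ (88 (E[f(Xᵀβ*)⁸])^{1/2} + 24 K₄⁴) ‖v‖⁴`. -/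
theorem fourth_moment_bound
    {Ω : Type*} [MeasurableSpace Ω] (μ : Measure Ω) [IsProbabilityMeasure μ]
    {d : ℕ} (X : Ω → EuclideanSpace ℝ (Fin d)) (ζ : Ω → ℝ) (Y : Ω → ℝ)
    (βs : EuclideanSpace ℝ (Fin d)) (f : ℝ → ℝ) (σ K₄ : ℝ)
    (hX : Measurable X) (hζ : Measurable ζ) (hf : Measurable f)
    (hXlaw : μ.map X = stdGaussian d) (hβ : ‖βs‖ = 1)
    (hY : ∀ ω, Y ω = f ⟪X ω, βs⟫ + ζ ω)
    (hζint : Integrable ζ μ) (hζsq : Integrable (fun ω => ζ ω ^ 2) μ)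
    (hζ4int : Integrable (fun ω => ζ ω ^ 4) μ)
    (hζm : μ[ζ | MeasurableSpace.comap X inferInstance] =ᵐ[μ] 0)
    (hζv : μ[fun ω => ζ ω ^ 2 | MeasurableSpace.comap X inferInstance] =ᵐ[μ] fun _ => σ ^ 2)
    (hζ4 : μ[fun ω => ζ ω ^ 4 | MeasurableSpace.comap X inferInstance] =ᵐ[μ] fun _ => K₄ ^ 4)
    (hK₄ : 0 ≤ K₄)
    (hf8 : Integrable (fun ω => f ⟪X ω, βs⟫ ^ 8) μ) :
    ∀ v : EuclideanSpace ℝ (Fin d),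
      ∫ ω, ⟪Y ω • X ω, v⟫ ^ 4 ∂μ
        ≤ (88 * Real.sqrt (∫ ω, f ⟪X ω, βs⟫ ^ 8 ∂μ) + 24 * K₄ ^ 4) * ‖v‖ ^ 4 := by
  intro v
  have hm : MeasurableSpace.comap X inferInstance ≤ _ := hX.comap_le
  have hXcm : Measurable[MeasurableSpace.comap X inferInstance] X := fun s hs => ⟨s, hs, rfl⟩
  set W : Ω → ℝ := fun ω => ⟪X ω, v⟫ with hW_def
  have hWm : Measurable W := (measurable_inner_right' v).comp hX
  have hW4int : Integrable (fun ω => W ω ^ 4) μ := integrable_inner_pow hX hXlaw v 4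
  have hW8int : Integrable (fun ω => W ω ^ 8) μ := integrable_inner_pow hX hXlaw v 8
  have hW4 : ∫ ω, W ω ^ 4 ∂μ = ‖v‖ ^ 4 * 3 := by
    rw [hW_def, integral_inner_pow hX hXlaw v 4, integral_pow_four_gaussianReal]
  have hW8 : ∫ ω, W ω ^ 8 ∂μ = ‖v‖ ^ 8 * 105 := by
    rw [hW_def, integral_inner_pow hX hXlaw v 8, integral_pow_eight_gaussianReal]
  -- noise term via conditional expectation
  have hWcm : Measurable[MeasurableSpace.comap X inferInstance] (fun ω => W ω ^ 4) :=
    (((measurable_inner_right' v).pow_const 4).comp hXcm)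
  have hnoise := integral_mul_le_of_condexp hm μ (hζ.pow_const 4)
    (fun ω => by positivity) hζ4int hWcm (fun ω => by positivity) hW4int
    (pow_nonneg hK₄ 4) hζ4
  obtain ⟨hnoiseInt, hnoiseLe⟩ := hnoise
  -- Cauchy–Schwarz term
  have hUm : Measurable (fun ω => f ⟪X ω, βs⟫) :=
    hf.comp ((measurable_inner_right' βs).comp hX)
  have hU4mem : MemLp (fun ω => f ⟪X ω, βs⟫ ^ 4) 2 μ := by
    rw [memLp_two_iff_integrable_sq (hUm.pow_const 4).aestronglyMeasurable]
    have heq : (fun ω => (f ⟪X ω, βs⟫ ^ 4) ^ 2) = fun ω => f ⟪X ω, βs⟫ ^ 8 := by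
      funext ω; rw [← pow_mul]
    rw [heq]; exact hf8
  have hW4mem : MemLp (fun ω => W ω ^ 4) 2 μ := by
    rw [memLp_two_iff_integrable_sq (hWm.pow_const 4).aestronglyMeasurable]
    have heq : (fun ω => (W ω ^ 4) ^ 2) = fun ω => W ω ^ 8 := by
      funext ω; rw [← pow_mul]
    rw [heq]; exact hW8int
  have hCSint : Integrable (fun ω => f ⟪X ω, βs⟫ ^ 4 * W ω ^ 4) μ := by
    have hmul := hW4mem.smul (𝕜 := ℝ) hU4mem (r := 1)
    rw [memLp_one_iff_integrable] at hmul
    exact hmul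
  have hof2 : ENNReal.ofReal (2:ℝ) = 2 := by norm_num
  have hconj : Real.HolderConjugate 2 2 := Real.HolderConjugate.two_two
  have hCS0 := integral_mul_le_Lp_mul_Lq_of_nonneg (μ := μ)
    (f := fun ω => f ⟪X ω, βs⟫ ^ 4) (g := fun ω => W ω ^ 4) hconj
    (Filter.Eventually.of_forall fun ω => by positivity)
    (Filter.Eventually.of_forall fun ω => by positivity)
    (by rw [hof2]; exact hU4mem) (by rw [hof2]; exact hW4mem)
  have hrw1 : ∫ ω, (f ⟪X ω, βs⟫ ^ 4) ^ (2:ℝ) ∂μ = ∫ ω, f ⟪X ω, βs⟫ ^ 8 ∂μ := by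
    congr 1; funext ω
    rw [show (2:ℝ) = ((2:ℕ):ℝ) by norm_num, Real.rpow_natCast, ← pow_mul]
  have hrw2 : ∫ ω, (W ω ^ 4) ^ (2:ℝ) ∂μ = ∫ ω, W ω ^ 8 ∂μ := by
    congr 1; funext ω
    rw [show (2:ℝ) = ((2:ℕ):ℝ) by norm_num, Real.rpow_natCast, ← pow_mul]
  rw [hrw1, hrw2, hW8] at hCS0
  have hsq8 : (‖v‖ ^ 8 * 105) ^ ((1:ℝ)/2) = Real.sqrt 105 * ‖v‖ ^ 4 := by
    rw [← Real.sqrt_eq_rpow, Real.sqrt_mul (by positivity),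
      show ‖v‖ ^ 8 = (‖v‖ ^ 4) ^ 2 by ring, Real.sqrt_sq (by positivity)]
    ring
  have hsqU : (∫ ω, f ⟪X ω, βs⟫ ^ 8 ∂μ) ^ ((1:ℝ)/2)
      = Real.sqrt (∫ ω, f ⟪X ω, βs⟫ ^ 8 ∂μ) := (Real.sqrt_eq_rpow _).symm
  rw [hsq8, hsqU] at hCS0
  -- pointwise bound
  have hpt : ∀ ω, ⟪Y ω • X ω, v⟫ ^ 4
      ≤ 8 * (f ⟪X ω, βs⟫ ^ 4 * W ω ^ 4) + 8 * (W ω ^ 4 * ζ ω ^ 4) := by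
    intro ω
    rw [real_inner_smul_left, hY ω]
    have h1 : (f ⟪X ω, βs⟫ + ζ ω) ^ 4 ≤ 8 * f ⟪X ω, βs⟫ ^ 4 + 8 * ζ ω ^ 4 :=
      add_pow_four_le _ _
    calc ((f ⟪X ω, βs⟫ + ζ ω) * W ω) ^ 4
        = (f ⟪X ω, βs⟫ + ζ ω) ^ 4 * W ω ^ 4 := by ring
      _ ≤ (8 * f ⟪X ω, βs⟫ ^ 4 + 8 * ζ ω ^ 4) * W ω ^ 4 :=
          mul_le_mul_of_nonneg_right h1 (by positivity)
      _ = 8 * (f ⟪X ω, βs⟫ ^ 4 * W ω ^ 4) + 8 * (W ω ^ 4 * ζ ω ^ 4) := by ring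
  have hRHSint : Integrable
      (fun ω => 8 * (f ⟪X ω, βs⟫ ^ 4 * W ω ^ 4) + 8 * (W ω ^ 4 * ζ ω ^ 4)) μ :=
    (hCSint.const_mul 8).add (hnoiseInt.const_mul 8)
  have hmain : ∫ ω, ⟪Y ω • X ω, v⟫ ^ 4 ∂μ
      ≤ ∫ ω, (8 * (f ⟪X ω, βs⟫ ^ 4 * W ω ^ 4) + 8 * (W ω ^ 4 * ζ ω ^ 4)) ∂μ :=
    integral_mono_of_nonneg (Filter.Eventually.of_forall fun ω => by positivity)
      hRHSint (Filter.Eventually.of_forall hpt)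
  rw [integral_add (hCSint.const_mul 8) (hnoiseInt.const_mul 8),
    MeasureTheory.integral_const_mul, MeasureTheory.integral_const_mul] at hmain
  have h105 : Real.sqrt 105 ≤ 11 := by
    rw [show (11:ℝ) = Real.sqrt 121 by
      rw [show (121:ℝ) = 11 ^ 2 by norm_num, Real.sqrt_sq (by norm_num)]]
    exact Real.sqrt_le_sqrt (by norm_num)
  have hsqnn : 0 ≤ Real.sqrt (∫ ω, f ⟪X ω, βs⟫ ^ 8 ∂μ) := Real.sqrt_nonneg _
  have hvnn : (0:ℝ) ≤ ‖v‖ ^ 4 := by positivity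
  have hW4nn : 0 ≤ ∫ ω, W ω ^ 4 ∂μ := integral_nonneg fun ω => by positivity
  have hK4nn : (0:ℝ) ≤ K₄ ^ 4 := pow_nonneg hK₄ 4
  calc ∫ ω, ⟪Y ω • X ω, v⟫ ^ 4 ∂μ
      ≤ 8 * ∫ ω, f ⟪X ω, βs⟫ ^ 4 * W ω ^ 4 ∂μ + 8 * ∫ ω, W ω ^ 4 * ζ ω ^ 4 ∂μ := hmain
    _ ≤ 8 * (Real.sqrt (∫ ω, f ⟪X ω, βs⟫ ^ 8 ∂μ) * (Real.sqrt 105 * ‖v‖ ^ 4))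
        + 8 * (K₄ ^ 4 * ∫ ω, W ω ^ 4 ∂μ) := by
        gcongr
    _ ≤ (88 * Real.sqrt (∫ ω, f ⟪X ω, βs⟫ ^ 8 ∂μ) + 24 * K₄ ^ 4) * ‖v‖ ^ 4 := by
        rw [hW4]
        nlinarith [mul_nonneg hsqnn hvnn]
end

section
/- Let r : ℝ^d → ℝ be twice continuously differentiable on the closed ball B(β*, R) with γ · I_d ⪯ ∇²r(β) ⪯ α · I_d for all β ∈ B(β*, R), where 0 < γ ≤ α, and suppose ∇r(β*) = 0. Let β ∈ B(β*, R), let 0 < η ≤ 2/(α + γ), and let g ∈ ℝ^d satisfy ‖g − ∇r(β)‖₂ ≤ A · ‖β − β*‖₂ + B for some A, B ≥ 0. Then ‖(β − η g) − β*‖₂ ≤ (√(1 − 2ηαγ/(α + γ)) + η A) · ‖β − β*‖₂ + η B. -/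
open Metric

section Helper

open InnerProductSpace

/-- A symmetric continuous bilinear form with quadratic form bounded by `ρ‖x‖²`
has operator norm at most `ρ`. -/
lemma bilin_opNorm_le_of_symm {E : Type*} [NormedAddCommGroup E] [InnerProductSpace ℝ E]
    (S : E →L[ℝ] E →L[ℝ] ℝ) {ρ : ℝ} (hρ : 0 ≤ ρ)
    (hsym : ∀ x y, S x y = S y x) (hq : ∀ x, |S x x| ≤ ρ * ‖x‖ ^ 2) : ‖S‖ ≤ ρ := by
  have habs : ∀ x y : E, S x y ≤ ρ / 2 * (‖x‖ ^ 2 + ‖y‖ ^ 2) := by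
    intro x y
    have h1 := (abs_le.mp (hq (x + y))).2
    have h2 := (abs_le.mp (hq (x - y))).1
    have e1 : S (x + y) (x + y) = S x x + S x y + S y x + S y y := by
      simp [map_add]; ring
    have e2 : S (x - y) (x - y) = S x x - S x y - S y x + S y y := by
      simp [map_sub]; ring
    have p1 : ‖x + y‖ ^ 2 = ‖x‖ ^ 2 + 2 * inner ℝ x y + ‖y‖ ^ 2 := norm_add_sq_real x y
    have p2 : ‖x - y‖ ^ 2 = ‖x‖ ^ 2 - 2 * inner ℝ x y + ‖y‖ ^ 2 := norm_sub_sq_real x y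
    have hxy := hsym x y
    nlinarith [h1, h2]
  have hb : ∀ x y : E, |S x y| ≤ ρ / 2 * (‖x‖ ^ 2 + ‖y‖ ^ 2) := by
    intro x y
    rw [abs_le]
    constructor
    · have := habs x (-y)
      simp only [map_neg, norm_neg] at this
      linarith
    · exact habs x y
  have key : ∀ x y : E, |S x y| ≤ ρ * ‖x‖ * ‖y‖ := by
    intro x y
    rcases eq_or_ne x 0 with rfl | hx
    · simp
    rcases eq_or_ne y 0 with rfl | hy
    · simp
    have hnx : (0:ℝ) < ‖x‖ := norm_pos_iff.mpr hx
    have hny : (0:ℝ) < ‖y‖ := norm_pos_iff.mpr hy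
    set t : ℝ := Real.sqrt (‖y‖ / ‖x‖) with ht
    have htpos : 0 < t := Real.sqrt_pos.mpr (div_pos hny hnx)
    have ht2 : t ^ 2 = ‖y‖ / ‖x‖ := Real.sq_sqrt (le_of_lt (div_pos hny hnx))
    have hS : S (t • x) (t⁻¹ • y) = S x y := by
      simp only [map_smul, ContinuousLinearMap.smul_apply, smul_eq_mul, ← mul_assoc]
      rw [inv_mul_cancel₀ (ne_of_gt htpos), one_mul]
    have := hb (t • x) (t⁻¹ • y)
    rw [hS] at this
    have hn1 : ‖t • x‖ ^ 2 = t ^ 2 * ‖x‖ ^ 2 := by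
      rw [norm_smul, mul_pow, Real.norm_eq_abs, abs_of_pos htpos]
    have hn2 : ‖t⁻¹ • y‖ ^ 2 = t⁻¹ ^ 2 * ‖y‖ ^ 2 := by
      rw [norm_smul, mul_pow, Real.norm_eq_abs, abs_of_pos (inv_pos.mpr htpos)]
    have he1 : t ^ 2 * ‖x‖ ^ 2 = ‖x‖ * ‖y‖ := by
      rw [ht2]; field_simp
    have he2 : t⁻¹ ^ 2 * ‖y‖ ^ 2 = ‖x‖ * ‖y‖ := by
      rw [inv_pow, ht2]; field_simp
    rw [hn1, hn2, he1, he2] at this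
    calc |S x y| ≤ ρ / 2 * (‖x‖ * ‖y‖ + ‖x‖ * ‖y‖) := this
      _ = ρ * ‖x‖ * ‖y‖ := by ring
  refine ContinuousLinearMap.opNorm_le_bound _ hρ fun x => ?_
  refine ContinuousLinearMap.opNorm_le_bound _ (mul_nonneg hρ (norm_nonneg x)) fun y => ?_
  simpa [Real.norm_eq_abs] using key x y

/-- The real inner product, bundled as a genuinely `ℝ`-linear continuous bilinear map. -/
noncomputable def realInnerCLM (E : Type*) [NormedAddCommGroup E] [InnerProductSpace ℝ E] :
    E →L[ℝ] E →L[ℝ] ℝ := innerSL ℝ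

lemma realInnerCLM_apply {E : Type*} [NormedAddCommGroup E] [InnerProductSpace ℝ E] (x y : E) :
    realInnerCLM E x y = inner ℝ x y := rfl

lemma realInnerCLM_norm {E : Type*} [NormedAddCommGroup E] [InnerProductSpace ℝ E] (x : E) :
    ‖realInnerCLM E x‖ = ‖x‖ := innerSL_apply_norm ℝ x

end Helper

set_option maxHeartbeats 1000000 in
/-- **Single-step robust gradient descent contraction (Lemma D.1).** -/
theorem robust_gd_single_step
    {d : ℕ} (r : EuclideanSpace ℝ (Fin d) → ℝ)
    (βs β g : EuclideanSpace ℝ (Fin d)) (R γ α η A B : ℝ)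
    (hr : ContDiff ℝ 2 r)
    (hγ : 0 < γ) (hγα : γ ≤ α)
    (hHess : ∀ β' ∈ closedBall βs R, ∀ v : EuclideanSpace ℝ (Fin d),
      γ * ‖v‖ ^ 2 ≤ fderiv ℝ (fun y => fderiv ℝ r y v) β' v ∧
        fderiv ℝ (fun y => fderiv ℝ r y v) β' v ≤ α * ‖v‖ ^ 2)
    (hgrad0 : gradient r βs = 0)
    (hβ : β ∈ closedBall βs R)
    (hη0 : 0 < η) (hη : η ≤ 2 / (α + γ))
    (hA : 0 ≤ A) (hB : 0 ≤ B)
    (hg : ‖g - gradient r β‖ ≤ A * ‖β - βs‖ + B) :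
    ‖(β - η • g) - βs‖
      ≤ (Real.sqrt (1 - 2 * η * α * γ / (α + γ)) + η * A) * ‖β - βs‖ + η * B := by
  have hR : 0 ≤ R := le_trans dist_nonneg (mem_closedBall.mp hβ)
  have hβsmem : βs ∈ closedBall βs R := mem_closedBall_self hR
  have hαγ : (0:ℝ) < α + γ := by linarith
  have hη2 : η * (α + γ) ≤ 2 := by
    rw [← le_div_iff₀ hαγ]; exact hη
  set c : ℝ := (α + γ) / 2 with hc
  set ρ : ℝ := (α - γ) / 2 with hρdef
  have hρ0 : 0 ≤ ρ := by rw [hρdef]; linarith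
  -- Step 1: the key gradient estimate  ‖∇r(β) - c•(β - β*)‖ ≤ ρ‖β - β*‖
  have hkey1 : ‖gradient r β - c • (β - βs)‖ ≤ ρ * ‖β - βs‖ := by
    have hd1 : Differentiable ℝ r := hr.differentiable (by norm_num)
    have hd2 : Differentiable ℝ (fderiv ℝ r) :=
      (hr.fderiv_right (m := 1) (by norm_num)).differentiable (by norm_num)
    have hfd : ∀ y v w : EuclideanSpace ℝ (Fin d),
        fderiv ℝ (fun z => fderiv ℝ r z w) y v = fderiv ℝ (fderiv ℝ r) y v w := by
      intro y v w
      have h := ((ContinuousLinearMap.apply ℝ ℝ w).hasFDerivAt.comp y (hd2 y).hasFDerivAt)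
      have h2 : fderiv ℝ (fun z => fderiv ℝ r z w) y
          = (ContinuousLinearMap.apply ℝ ℝ w).comp (fderiv ℝ (fderiv ℝ r) y) := h.fderiv
      rw [h2]; rfl
    have hsym : ∀ y v w : EuclideanSpace ℝ (Fin d),
        fderiv ℝ (fderiv ℝ r) y v w = fderiv ℝ (fderiv ℝ r) y w v := fun y v w =>
      second_derivative_symmetric (fun z => (hd1 z).hasFDerivAt) ((hd2 y).hasFDerivAt) v w
    set D : EuclideanSpace ℝ (Fin d) →L[ℝ] (EuclideanSpace ℝ (Fin d) →L[ℝ] ℝ) :=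
      realInnerCLM (EuclideanSpace ℝ (Fin d)) with hDdef
    have hD : ∀ x y : EuclideanSpace ℝ (Fin d), D x y = inner ℝ x y := fun x y =>
      realInnerCLM_apply x y
    have hDnorm : ∀ x : EuclideanSpace ℝ (Fin d), ‖D x‖ = ‖x‖ := fun x => realInnerCLM_norm x
    set Φ : EuclideanSpace ℝ (Fin d) → (EuclideanSpace ℝ (Fin d) →L[ℝ] ℝ) :=
      fun y => fderiv ℝ r y - c • (D y) with hΦ
    have hMVT : ‖Φ β - Φ βs‖ ≤ ρ * ‖β - βs‖ := by
      refine (convex_closedBall βs R).norm_image_sub_le_of_norm_hasFDerivWithin_le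
        (f' := fun y => fderiv ℝ (fderiv ℝ r) y - c • D)
        (fun y _ => (((hd2 y).hasFDerivAt.sub
          ((D.hasFDerivAt (x := y)).const_smul c))).hasFDerivWithinAt)
        (fun y hy => ?_) hβsmem hβ
      refine bilin_opNorm_le_of_symm _ hρ0 (fun v w => ?_) (fun v => ?_)
      · simp only [ContinuousLinearMap.sub_apply, ContinuousLinearMap.smul_apply, smul_eq_mul]
        rw [hsym y v w, hD, hD, real_inner_comm]
      · have hb := hHess y hy v
        rw [hfd y v v] at hb
        have hvv : D v v = ‖v‖ ^ 2 := by rw [hD]; exact real_inner_self_eq_norm_sq v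
        simp only [ContinuousLinearMap.sub_apply, ContinuousLinearMap.smul_apply, hvv,
          smul_eq_mul]
        rw [abs_le]
        constructor
        · nlinarith [hb.1, sq_nonneg ‖v‖]
        · nlinarith [hb.2, sq_nonneg ‖v‖]
    have hgradval : ∀ (y : EuclideanSpace ℝ (Fin d)) w,
        fderiv ℝ r y w = inner ℝ (gradient r y) w := by
      intro y w
      exact (InnerProductSpace.toDual_symm_apply).symm
    have hΦdiff : Φ β - Φ βs = D (gradient r β - c • (β - βs)) := by
      ext w
      simp only [hΦ, ContinuousLinearMap.sub_apply, ContinuousLinearMap.smul_apply, hD]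
      rw [hgradval β w, hgradval βs w, hgrad0]
      simp only [inner_zero_left, inner_sub_left, inner_smul_left, real_inner_smul_left,
        smul_eq_mul, RCLike.star_def, conj_trivial]
      ring
    calc ‖gradient r β - c • (β - βs)‖ = ‖D (gradient r β - c • (β - βs))‖ := (hDnorm _).symm
      _ = ‖Φ β - Φ βs‖ := by rw [hΦdiff]
      _ ≤ ρ * ‖β - βs‖ := hMVT
  -- Step 2: contraction of the exact gradient step
  clear hHess hgrad0 hr hβ hβsmem
  have hηc : η * c ≤ 1 := by
    have h : η * c = η * (α + γ) / 2 := by rw [hc]; ring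
    rw [h]; linarith
  have hηγ : η * γ ≤ 1 := by
    nlinarith [mul_le_mul_of_nonneg_left (show γ ≤ c by rw [hc]; linarith) hη0.le]
  have hcontract : ‖(β - βs) - η • gradient r β‖ ≤ (1 - η * γ) * ‖β - βs‖ := by
    have hrw : (β - βs) - η • gradient r β
        = (1 - η * c) • (β - βs) - η • (gradient r β - c • (β - βs)) := by module
    rw [hrw]
    calc ‖(1 - η * c) • (β - βs) - η • (gradient r β - c • (β - βs))‖
        ≤ ‖(1 - η * c) • (β - βs)‖ + ‖η • (gradient r β - c • (β - βs))‖ := norm_sub_le _ _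
      _ = (1 - η * c) * ‖β - βs‖ + η * ‖gradient r β - c • (β - βs)‖ := by
          rw [norm_smul, norm_smul, Real.norm_eq_abs, Real.norm_eq_abs,
            abs_of_nonneg (by linarith), abs_of_nonneg hη0.le]
      _ ≤ (1 - η * c) * ‖β - βs‖ + η * (ρ * ‖β - βs‖) :=
          add_le_add_right (mul_le_mul_of_nonneg_left hkey1 hη0.le) _
      _ = (1 - η * γ) * ‖β - βs‖ := by rw [hc, hρdef]; ring
  -- Step 3: the square-root bound
  have hsqrt : 1 - η * γ ≤ Real.sqrt (1 - 2 * η * α * γ / (α + γ)) := by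
    have hX : 2 * η * α * γ / (α + γ) ≤ 2 * η * γ - η ^ 2 * γ ^ 2 := by
      rw [div_le_iff₀ hαγ]
      nlinarith [mul_nonneg (mul_nonneg (mul_nonneg hη0.le hη0.le) hγ.le) hγ.le,
        mul_nonneg (mul_nonneg hη0.le hγ.le) hγ.le]
    have h1 : (1 - η * γ) ^ 2 ≤ 1 - 2 * η * α * γ / (α + γ) := by nlinarith [hX]
    calc 1 - η * γ = Real.sqrt ((1 - η * γ) ^ 2) := (Real.sqrt_sq (by linarith)).symm
      _ ≤ Real.sqrt (1 - 2 * η * α * γ / (α + γ)) := Real.sqrt_le_sqrt h1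
  -- Step 4: put everything together
  have hfin : (β - η • g) - βs = ((β - βs) - η • gradient r β) - η • (g - gradient r β) := by
    module
  have hsplit : ‖(β - η • g) - βs‖ ≤ (1 - η * γ) * ‖β - βs‖ + η * (A * ‖β - βs‖ + B) := by
    rw [hfin]
    calc ‖((β - βs) - η • gradient r β) - η • (g - gradient r β)‖
        ≤ ‖(β - βs) - η • gradient r β‖ + ‖η • (g - gradient r β)‖ := norm_sub_le _ _
      _ = ‖(β - βs) - η • gradient r β‖ + η * ‖g - gradient r β‖ := by
          rw [norm_smul, Real.norm_eq_abs, abs_of_nonneg hη0.le]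
      _ ≤ (1 - η * γ) * ‖β - βs‖ + η * (A * ‖β - βs‖ + B) :=
          add_le_add hcontract (mul_le_mul_of_nonneg_left hg hη0.le)
  have hmono := mul_le_mul_of_nonneg_right hsqrt (norm_nonneg (β - βs))
  nlinarith [hsplit, hmono]
end

section
/- Let r : ℝ^d → ℝ be twice continuously differentiable on the closed ball B(β*, R) with γ · I_d ⪯ ∇²r(β) ⪯ α · I_d for all β ∈ B(β*, R), where 0 < γ ≤ α, and suppose ∇r(β*) = 0. Set η = 2/(α + γ), and let A, B ≥ 0 satisfy η A ≤ γ/(α + γ) and η B ≤ γ R/(α + γ). Let β₀ ∈ B(β*, R) and define β_{t+1} = β_t − η g_t for t = 0, …, P−1, where each g_t ∈ ℝ^d satisfies ‖g_t − ∇r(β_t)‖₂ ≤ A · ‖β_t − β*‖₂ + B. Then β_t ∈ B(β*, R) for all t ≤ P, and ‖β_P − β*‖₂ ≤ R · exp(−P γ/(α + γ)) + 2B/γ. -/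
open Metric
open scoped RealInnerProductSpace

/-- A symmetric continuous bilinear form on a real inner product space whose quadratic form is
bounded by `M * ‖x‖²` satisfies `|b x y| ≤ M * ‖x‖ * ‖y‖`. -/
lemma bilin_abs_le {E : Type*} [NormedAddCommGroup E] [InnerProductSpace ℝ E]
    (b : E →L[ℝ] E →L[ℝ] ℝ) (M : ℝ) (hM : 0 ≤ M)
    (hsym : ∀ x y : E, b x y = b y x)
    (hquad : ∀ x : E, |b x x| ≤ M * ‖x‖ ^ 2) (x y : E) : |b x y| ≤ M * ‖x‖ * ‖y‖ := by
  have key : ∀ u v : E, 4 * b u v ≤ 2 * M * (‖u‖ ^ 2 + ‖v‖ ^ 2) := by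
    intro u v
    have e1 : b (u + v) (u + v) - b (u - v) (u - v) = 4 * b u v := by
      simp only [map_add, map_sub, ContinuousLinearMap.add_apply, ContinuousLinearMap.sub_apply]
      rw [hsym v u]; ring
    have h2 := abs_le.1 (hquad (u + v))
    have h3 := abs_le.1 (hquad (u - v))
    have h5 : ‖u + v‖ ^ 2 + ‖u - v‖ ^ 2 = 2 * (‖u‖ ^ 2 + ‖v‖ ^ 2) := by
      have := parallelogram_law_with_norm ℝ u v
      nlinarith [this]
    nlinarith [h2.2, h3.1]
  rcases eq_or_ne x 0 with hx | hx
  · simp [hx, hM]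
  rcases eq_or_ne y 0 with hy | hy
  · simp only [hy, map_zero, abs_zero, norm_zero]; positivity
  have hxn : (0:ℝ) < ‖x‖ := norm_pos_iff.2 hx
  have hyn : (0:ℝ) < ‖y‖ := norm_pos_iff.2 hy
  have main : ∀ v : E, ‖v‖ = ‖y‖ → b x v ≤ M * ‖x‖ * ‖y‖ := by
    intro v hv
    have hvn : (0:ℝ) < ‖v‖ := hv ▸ hyn
    have key' := key (‖x‖⁻¹ • x) (‖v‖⁻¹ • v)
    have hb2 : b (‖x‖⁻¹ • x) (‖v‖⁻¹ • v) = ‖x‖⁻¹ * ‖v‖⁻¹ * b x v := by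
      simp only [map_smul, ContinuousLinearMap.smul_apply, ContinuousLinearMap.map_smul,
        smul_eq_mul]
      ring
    have hn1 : ‖‖x‖⁻¹ • x‖ = 1 := by
      rw [norm_smul, Real.norm_eq_abs, abs_inv, abs_norm, inv_mul_cancel₀ hxn.ne']
    have hn2 : ‖‖v‖⁻¹ • v‖ = 1 := by
      rw [norm_smul, Real.norm_eq_abs, abs_inv, abs_norm, inv_mul_cancel₀ hvn.ne']
    rw [hb2, hn1, hn2] at key'
    have h7 : ‖x‖⁻¹ * ‖v‖⁻¹ * b x v ≤ M := by nlinarith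
    calc b x v = ‖x‖ * ‖v‖ * (‖x‖⁻¹ * ‖v‖⁻¹ * b x v) := by field_simp
      _ ≤ ‖x‖ * ‖v‖ * M := mul_le_mul_of_nonneg_left h7 (by positivity)
      _ = M * ‖x‖ * ‖y‖ := by rw [hv]; ring
  have h8 := main y rfl
  have h9 := main (-y) (by simp)
  rw [map_neg] at h9
  rw [abs_le]
  constructor <;> [linarith [h9]; linarith [h8]]

set_option maxHeartbeats 2000000 in
/-- Key contraction step for gradient descent with exact gradients. -/
lemma gd_contraction {d : ℕ} (r : EuclideanSpace ℝ (Fin d) → ℝ)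
    (βs : EuclideanSpace ℝ (Fin d)) (R γ α : ℝ)
    (hr : ContDiff ℝ 2 r) (hγ : 0 < γ) (hγα : γ ≤ α)
    (hHess : ∀ β' ∈ closedBall βs R, ∀ v : EuclideanSpace ℝ (Fin d),
      γ * ‖v‖ ^ 2 ≤ fderiv ℝ (fun y => fderiv ℝ r y v) β' v ∧
        fderiv ℝ (fun y => fderiv ℝ r y v) β' v ≤ α * ‖v‖ ^ 2)
    (hgrad0 : gradient r βs = 0)
    (β' : EuclideanSpace ℝ (Fin d)) (hβ' : β' ∈ closedBall βs R) (hβs : βs ∈ closedBall βs R) :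
    ‖β' - (2 / (α + γ)) • gradient r β' - βs‖ ≤ (α - γ) / (α + γ) * ‖β' - βs‖ := by
  have hαγ : (0:ℝ) < α + γ := by linarith
  set c : ℝ := (α + γ) / 2 with hc
  set M : ℝ := (α - γ) / 2 with hMdef
  have hM : 0 ≤ M := by rw [hMdef]; linarith
  have hd1 : ContDiff ℝ 1 (fderiv ℝ r) := hr.fderiv_right (by norm_num)
  have hdiff1 : Differentiable ℝ (fderiv ℝ r) := hd1.differentiable (by norm_num)
  have hdiffr : Differentiable ℝ r := hr.differentiable (by norm_num)
  set T : EuclideanSpace ℝ (Fin d) →L[ℝ] (EuclideanSpace ℝ (Fin d) →L[ℝ] ℝ) :=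
    (innerSL ℝ : EuclideanSpace ℝ (Fin d) →L[ℝ] EuclideanSpace ℝ (Fin d) →L[ℝ] ℝ) with hT
  set Φ : EuclideanSpace ℝ (Fin d) → (EuclideanSpace ℝ (Fin d) →L[ℝ] ℝ) :=
    fun y => fderiv ℝ r y - c • (T y) with hΦ
  have hΦdiff : ∀ x, HasFDerivAt Φ (fderiv ℝ (fderiv ℝ r) x - c • T) x := by
    intro x
    exact ((hdiff1 x).hasFDerivAt).sub ((T.hasFDerivAt).const_smul c)
  have hbound : ∀ x ∈ closedBall βs R, ‖fderiv ℝ (fderiv ℝ r) x - c • T‖ ≤ M := by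
    intro x hx
    set b := fderiv ℝ (fderiv ℝ r) x - c • T with hb
    have hsnd : ∀ v w, fderiv ℝ (fderiv ℝ r) x v w = fderiv ℝ (fderiv ℝ r) x w v := by
      intro v w
      exact second_derivative_symmetric (fun y => (hdiffr y).hasFDerivAt)
        ((hdiff1 x).hasFDerivAt) v w
    have happly : ∀ v, fderiv ℝ (fun y => fderiv ℝ r y v) x v
        = fderiv ℝ (fderiv ℝ r) x v v := by
      intro v
      have h := fderiv_clm_apply (hdiff1 x) (differentiableAt_const v)
      rw [h]
      simp [ContinuousLinearMap.flip_apply]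
    have hTapp : ∀ v w : EuclideanSpace ℝ (Fin d), T v w = ⟪v, w⟫ := fun v w =>
      innerSL_apply_apply (𝕜 := ℝ) v w
    have hsym : ∀ v w, b v w = b w v := by
      intro v w
      simp only [hb, ContinuousLinearMap.sub_apply, ContinuousLinearMap.smul_apply,
        smul_eq_mul, hTapp]
      rw [hsnd v w, real_inner_comm]
    have hquad : ∀ v, |b v v| ≤ M * ‖v‖ ^ 2 := by
      intro v
      have h1 := (hHess x hx v).1
      have h2 := (hHess x hx v).2
      rw [happly v] at h1 h2
      have hin : T v v = ‖v‖ ^ 2 := by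
        rw [hTapp, real_inner_self_eq_norm_sq]
      simp only [hb, ContinuousLinearMap.sub_apply, ContinuousLinearMap.smul_apply, hin,
        smul_eq_mul]
      rw [abs_le, hMdef, hc]
      constructor <;> nlinarith
    have hbil := bilin_abs_le b M hM hsym hquad
    apply ContinuousLinearMap.opNorm_le_bound _ hM
    intro v
    apply ContinuousLinearMap.opNorm_le_bound _ (by positivity)
    intro w
    rw [Real.norm_eq_abs]
    calc |b v w| ≤ M * ‖v‖ * ‖w‖ := hbil v w
      _ = M * ‖v‖ * ‖w‖ := rfl
  have hlip : ‖Φ β' - Φ βs‖ ≤ M * ‖β' - βs‖ :=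
    (convex_closedBall βs R).norm_image_sub_le_of_norm_fderiv_le
      (f := Φ) (fun x _ => (hΦdiff x).differentiableAt)
      (fun x hx => by rw [(hΦdiff x).fderiv]; exact hbound x hx) hβs hβ'
  set G := gradient r β' with hG
  set v := β' - βs with hv
  have hgradinner : ∀ w, ⟪G, w⟫ = fderiv ℝ r β' w := by
    intro w
    exact InnerProductSpace.toDual_symm_apply
  have hgradinner0 : ∀ w, fderiv ℝ r βs w = 0 := by
    intro w
    have h : ⟪gradient r βs, w⟫ = fderiv ℝ r βs w := InnerProductSpace.toDual_symm_apply
    rw [hgrad0] at h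
    simpa using h.symm
  have hrepr : ∀ w, ⟪G - c • v, w⟫ = (Φ β' - Φ βs) w := by
    intro w
    rw [inner_sub_left, real_inner_smul_left, hgradinner]
    simp only [hΦ, ContinuousLinearMap.sub_apply, ContinuousLinearMap.smul_apply,
      smul_eq_mul, hgradinner0 w, hv]
    have hTapp : ∀ u : EuclideanSpace ℝ (Fin d), T u w = ⟪u, w⟫ := fun u =>
      innerSL_apply_apply (𝕜 := ℝ) u w
    rw [hTapp, hTapp, inner_sub_left]
    ring
  have hnorm : ‖G - c • v‖ ≤ ‖Φ β' - Φ βs‖ := by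
    rcases eq_or_ne (G - c • v) 0 with h0 | h0
    · rw [h0, norm_zero]; exact norm_nonneg _
    have h1 : ‖G - c • v‖ ^ 2 = (Φ β' - Φ βs) (G - c • v) := by
      rw [← hrepr, real_inner_self_eq_norm_sq]
    have h2 : (Φ β' - Φ βs) (G - c • v) ≤ ‖Φ β' - Φ βs‖ * ‖G - c • v‖ :=
      le_trans (le_abs_self _) (by
        rw [← Real.norm_eq_abs]; exact (Φ β' - Φ βs).le_opNorm _)
    have h3 : (0:ℝ) < ‖G - c • v‖ := norm_pos_iff.2 h0
    nlinarith
  have hfinal : ‖G - c • v‖ ≤ M * ‖v‖ := hnorm.trans hlip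
  have hkey : β' - (2 / (α + γ)) • G - βs = -((2 / (α + γ)) • (G - c • v)) := by
    have hηc : (2 / (α + γ)) * c = 1 := by rw [hc]; field_simp
    rw [smul_sub, smul_smul, hηc, one_smul, hv]
    abel
  rw [hkey, norm_neg, norm_smul, Real.norm_eq_abs, abs_of_pos (by positivity)]
  calc 2 / (α + γ) * ‖G - c • v‖ ≤ 2 / (α + γ) * (M * ‖v‖) :=
        mul_le_mul_of_nonneg_left hfinal (by positivity)
    _ = (α - γ) / (α + γ) * ‖β' - βs‖ := by
        rw [hMdef, hv]; field_simp

/-- **Deterministic robust gradient descent convergence (induction underlying Theorem 4.6).** -/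
theorem robust_gd_convergence
    {d : ℕ} (r : EuclideanSpace ℝ (Fin d) → ℝ)
    (βs : EuclideanSpace ℝ (Fin d)) (R γ α A B : ℝ) (P : ℕ)
    (β g : ℕ → EuclideanSpace ℝ (Fin d))
    (hr : ContDiff ℝ 2 r)
    (hγ : 0 < γ) (hγα : γ ≤ α)
    (hHess : ∀ β' ∈ closedBall βs R, ∀ v : EuclideanSpace ℝ (Fin d),
      γ * ‖v‖ ^ 2 ≤ fderiv ℝ (fun y => fderiv ℝ r y v) β' v ∧
        fderiv ℝ (fun y => fderiv ℝ r y v) β' v ≤ α * ‖v‖ ^ 2)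
    (hgrad0 : gradient r βs = 0)
    (hA : 0 ≤ A) (hB : 0 ≤ B)
    (hηA : 2 / (α + γ) * A ≤ γ / (α + γ))
    (hηB : 2 / (α + γ) * B ≤ γ * R / (α + γ))
    (hβ0 : β 0 ∈ closedBall βs R)
    (hupd : ∀ t < P, β (t + 1) = β t - (2 / (α + γ)) • g t)
    (hg : ∀ t < P, ‖g t - gradient r (β t)‖ ≤ A * ‖β t - βs‖ + B) :
    (∀ t ≤ P, β t ∈ closedBall βs R)
    ∧ ‖β P - βs‖ ≤ R * Real.exp (-(P : ℝ) * γ / (α + γ)) + 2 * B / γ := by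
  have hαγ : (0:ℝ) < α + γ := by linarith
  have hR : 0 ≤ R := le_trans dist_nonneg (mem_closedBall.1 hβ0)
  have hβs : βs ∈ closedBall βs R := mem_closedBall_self hR
  set ρ : ℝ := α / (α + γ) with hρdef
  have hρ0 : 0 ≤ ρ := div_nonneg (by linarith) hαγ.le
  have hstep : ∀ t, t < P → β t ∈ closedBall βs R →
      ‖β (t + 1) - βs‖ ≤ ρ * ‖β t - βs‖ + 2 / (α + γ) * B := by
    intro t ht hmem
    have hcontr := gd_contraction r βs R γ α hr hγ hγα hHess hgrad0 (β t) hmem hβs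
    have hgt := hg t ht
    have heq : β (t + 1) - βs
        = (β t - (2 / (α + γ)) • gradient r (β t) - βs)
          - (2 / (α + γ)) • (g t - gradient r (β t)) := by
      rw [hupd t ht, smul_sub]
      abel
    rw [heq]
    have htri := norm_sub_le (β t - (2 / (α + γ)) • gradient r (β t) - βs)
      ((2 / (α + γ)) • (g t - gradient r (β t)))
    have hsm : ‖(2 / (α + γ)) • (g t - gradient r (β t))‖
        = 2 / (α + γ) * ‖g t - gradient r (β t)‖ := by
      rw [norm_smul, Real.norm_eq_abs, abs_of_pos (by positivity)]
    have hη0 : (0:ℝ) < 2 / (α + γ) := by positivity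
    have hv0 : (0:ℝ) ≤ ‖β t - βs‖ := norm_nonneg _
    have h2 : 2 / (α + γ) * ‖g t - gradient r (β t)‖
        ≤ 2 / (α + γ) * (A * ‖β t - βs‖ + B) :=
      mul_le_mul_of_nonneg_left hgt hη0.le
    have h3 : (α - γ) / (α + γ) + 2 / (α + γ) * A ≤ ρ := by
      rw [hρdef]
      have : (α - γ) / (α + γ) + γ / (α + γ) = α / (α + γ) := by field_simp; ring
      linarith
    nlinarith [htri, hsm, h2, h3, hcontr, mul_le_mul_of_nonneg_right h3 hv0]
  have hball : ∀ t ≤ P, β t ∈ closedBall βs R := by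
    intro t
    induction t with
    | zero => intro _; exact hβ0
    | succ n ih =>
      intro h
      have hnP : n < P := Nat.lt_of_succ_le h
      have hmem := ih hnP.le
      have hs := hstep n hnP hmem
      rw [mem_closedBall, dist_eq_norm]
      have hvR : ‖β n - βs‖ ≤ R := by
        rw [mem_closedBall, dist_eq_norm] at hmem; exact hmem
      have hsum : ρ * R + γ * R / (α + γ) = R := by
        rw [hρdef]; field_simp
      nlinarith [hs, hρ0, hηB]
  have hbound : ∀ t ≤ P, ‖β t - βs‖ ≤ ρ ^ t * R + 2 * B / γ := by
    intro t
    induction t with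
    | zero =>
      intro _
      have : ‖β 0 - βs‖ ≤ R := by
        rw [mem_closedBall, dist_eq_norm] at hβ0; exact hβ0
      have h2B : 0 ≤ 2 * B / γ := by positivity
      simpa using this.trans (by linarith)
    | succ n ih =>
      intro h
      have hnP : n < P := Nat.lt_of_succ_le h
      have hmem := hball n hnP.le
      have hs := hstep n hnP hmem
      have hb := ih hnP.le
      have hfix : ρ * (2 * B / γ) + 2 / (α + γ) * B = 2 * B / γ := by
        rw [hρdef]; field_simp
      have hmono : ρ * ‖β n - βs‖ ≤ ρ * (ρ ^ n * R + 2 * B / γ) :=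
        mul_le_mul_of_nonneg_left hb hρ0
      calc ‖β (n + 1) - βs‖ ≤ ρ * ‖β n - βs‖ + 2 / (α + γ) * B := hs
        _ ≤ ρ * (ρ ^ n * R + 2 * B / γ) + 2 / (α + γ) * B := by linarith
        _ = ρ ^ (n + 1) * R + (ρ * (2 * B / γ) + 2 / (α + γ) * B) := by ring
        _ = ρ ^ (n + 1) * R + 2 * B / γ := by rw [hfix]
  refine ⟨hball, ?_⟩
  have h1 := hbound P le_rfl
  have hexp : ρ ≤ Real.exp (-(γ / (α + γ))) := by
    have h := Real.add_one_le_exp (-(γ / (α + γ)))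
    have heq : -(γ / (α + γ)) + 1 = ρ := by rw [hρdef]; field_simp; ring
    linarith
  have h2 : ρ ^ P ≤ Real.exp (-(γ / (α + γ))) ^ P := pow_le_pow_left₀ hρ0 hexp P
  rw [← Real.exp_nat_mul] at h2
  have h3 : (P : ℝ) * -(γ / (α + γ)) = -(P : ℝ) * γ / (α + γ) := by ring
  rw [h3] at h2
  have h4 : ρ ^ P * R ≤ R * Real.exp (-(P : ℝ) * γ / (α + γ)) := by
    rw [mul_comm (ρ ^ P) R]
    exact mul_le_mul_of_nonneg_left h2 hR
  linarith
end
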